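/- For any orthogonal matrix T ∈ O(n²−1) and a traceless orthonormal Hermitian basis (f_α) of the traceless Hermitian matrices, the map φ[T,0](a) = (Tr a/n)·1ₙ + (1/(n−1))·∑_α (T x)_α f_α with x_α = Tr(a f_α) is a positive, trace-preserving, unital linear map on M_n(ℂ). -/

import Mathlib

open ComplexOrder Matrix

/-- Trace and trace of the square of a Hermitian matrix via its eigenvalues. -/
lemma trace_eig {n : ℕ} {A : Matrix (Fin n) (Fin n) ℂ} (hA : A.IsHermitian) :
    A.trace = ∑ i, (hA.eigenvalues i : ℂ) ∧
    (A * A).trace = ∑ i, ((hA.eigenvalues i : ℂ)) ^ 2 := by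
  set U : Matrix (Fin n) (Fin n) ℂ := (hA.eigenvectorUnitary : Matrix (Fin n) (Fin n) ℂ) with hUdef
  set D : Matrix (Fin n) (Fin n) ℂ := diagonal (RCLike.ofReal ∘ hA.eigenvalues) with hDdef
  have hU : star U * U = 1 := Matrix.mem_unitaryGroup_iff'.mp hA.eigenvectorUnitary.2
  have hspec : A = U * D * star U := hA.spectral_theorem
  constructor
  · conv_lhs => rw [hspec]
    rw [trace_mul_cycle, hU, Matrix.one_mul, hDdef, trace_diagonal]
    simp
  · have key : (U * D * star U) * (U * D * star U) = U * (D * D) * star U := by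
      calc (U * D * star U) * (U * D * star U)
          = U * D * ((star U * U) * (D * star U)) := by
            simp only [Matrix.mul_assoc]
        _ = U * (D * D) * star U := by
            rw [hU, Matrix.one_mul]; simp only [Matrix.mul_assoc]
    conv_lhs => rw [hspec]
    rw [key, trace_mul_cycle, hU, Matrix.one_mul, hDdef, diagonal_mul_diagonal,
      trace_diagonal]
    simp [sq]

/-- Trace of a product of two linear combinations of `1` and an orthonormal traceless family. -/
lemma trace_comb {n m : ℕ} (f : Fin m → Matrix (Fin n) (Fin n) ℂ)
    (htraceless : ∀ α, (f α).trace = 0)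
    (horth : ∀ α β, (f α * f β).trace = if α = β then 1 else 0)
    (c d : ℂ) (y z : Fin m → ℂ) :
    ((c • 1 + ∑ α, y α • f α) * (d • 1 + ∑ β, z β • f β)).trace
      = c * d * n + ∑ α, y α * z α := by
  simp only [Matrix.add_mul, Matrix.mul_add, Matrix.smul_mul, Matrix.mul_smul,
    Matrix.one_mul, Matrix.mul_one, smul_smul, Finset.smul_sum, Matrix.sum_mul,
    Matrix.mul_sum, trace_add, trace_smul, trace_sum, smul_eq_mul, htraceless, horth,
    mul_zero, Finset.sum_const_zero, add_zero, zero_add, trace_one, mul_ite, mul_one]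
  simp only [Finset.sum_ite_eq, Finset.mem_univ, if_true, Fintype.card_fin]
  ring_nf
  congr 1
  exact Finset.sum_congr rfl fun α _ => by
    simp [Finset.sum_ite_eq']; ring

/-- If the sum of squares of reals summing to `tr ≥ 0` is at most `tr²/(n-1)`, all are
nonnegative. -/
lemma eig_nonneg_of_sq_bound {n : ℕ} (hn : 2 ≤ n) (μ : Fin n → ℝ) (tr : ℝ) (htr : 0 ≤ tr)
    (hsum : ∑ i, μ i = tr) (hsq : ∑ i, μ i ^ 2 ≤ tr ^ 2 / (n - 1)) : ∀ i, 0 ≤ μ i := by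
  intro i
  by_contra hneg
  push_neg at hneg
  have hn1 : (1:ℝ) ≤ (n:ℝ) - 1 := by
    have : (2:ℝ) ≤ n := by exact_mod_cast hn
    linarith
  set s := Finset.univ.erase i with hs
  have hcard : (s.card : ℝ) = (n:ℝ) - 1 := by
    rw [hs, Finset.card_erase_of_mem (Finset.mem_univ i)]
    simp only [Finset.card_univ, Fintype.card_fin]
    have : 1 ≤ n := le_trans one_le_two hn
    push_cast [Nat.cast_sub this]
    ring
  have hsum' : ∑ j ∈ s, μ j = tr - μ i := by
    have := Finset.add_sum_erase Finset.univ μ (Finset.mem_univ i)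
    rw [hsum] at this
    linarith [this]
  have hcs : (∑ j ∈ s, μ j) ^ 2 ≤ (s.card : ℝ) * ∑ j ∈ s, μ j ^ 2 :=
    sq_sum_le_card_mul_sum_sq
  have hsplit : ∑ j, μ j ^ 2 = μ i ^ 2 + ∑ j ∈ s, μ j ^ 2 :=
    (Finset.add_sum_erase Finset.univ (fun j => μ j ^ 2) (Finset.mem_univ i)).symm
  rw [hsum', hcard] at hcs
  rw [hsplit] at hsq
  have hdiv : tr ^ 2 / ((n:ℝ) - 1) * ((n:ℝ)-1) = tr ^ 2 := by
    field_simp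
  nlinarith [sq_nonneg (μ i),
    mul_pos (mul_pos (by linarith : (0:ℝ) < (n:ℝ)-1) (neg_pos.mpr hneg)) (neg_pos.mpr hneg)]

/-- The map `φ[T,0](a) = (Tr a/n)·1 + (1/(n−1))·∑_α (Tx)_α f_α`, `x_β = Tr(a f_β)`. -/
noncomputable def phiT0 (n : ℕ) (f : Fin (n ^ 2 - 1) → Matrix (Fin n) (Fin n) ℂ)
    (T : Matrix (Fin (n ^ 2 - 1)) (Fin (n ^ 2 - 1)) ℝ)
    (a : Matrix (Fin n) (Fin n) ℂ) : Matrix (Fin n) (Fin n) ℂ :=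
  (Matrix.trace a / n) • (1 : Matrix (Fin n) (Fin n) ℂ) +
    (1 / ((n : ℂ) - 1)) • ∑ α, (∑ β, (T α β : ℂ) * Matrix.trace (a * f β)) • f α

set_option maxHeartbeats 1600000 in
/-- For any orthogonal `T` and a traceless orthonormal Hermitian family `(f_α)`, the map
`φ[T,0]` is a positive, trace-preserving, unital linear map on `M_n(ℂ)`. -/
theorem stmt_7 (n : ℕ) (hn : 2 ≤ n) (f : Fin (n ^ 2 - 1) → Matrix (Fin n) (Fin n) ℂ)
    (hherm : ∀ α, (f α).IsHermitian) (htraceless : ∀ α, Matrix.trace (f α) = 0)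
    (horth : ∀ α β, Matrix.trace (f α * f β) = if α = β then 1 else 0)
    (T : Matrix (Fin (n ^ 2 - 1)) (Fin (n ^ 2 - 1)) ℝ)
    (hT : T.transpose * T = 1) :
    IsLinearMap ℂ (phiT0 n f T) ∧
    (∀ a : Matrix (Fin n) (Fin n) ℂ, Matrix.trace (phiT0 n f T a) = Matrix.trace a) ∧
    phiT0 n f T 1 = 1 ∧
    (∀ a : Matrix (Fin n) (Fin n) ℂ, a.PosSemidef → (phiT0 n f T a).PosSemidef) := by
  have hn0 : (n:ℂ) ≠ 0 := Nat.cast_ne_zero.mpr (by omega)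
  have hn1R : (1:ℝ) ≤ (n:ℝ) - 1 := by
    have : (2:ℝ) ≤ n := by exact_mod_cast hn
    linarith
  have hn1 : ((n:ℂ)) - 1 ≠ 0 := by
    have h : ((n:ℂ)) - 1 = (((n:ℝ) - 1 : ℝ) : ℂ) := by push_cast; ring
    rw [h, Complex.ofReal_ne_zero]
    linarith
  -- trace preservation, proved once
  have htr : ∀ a : Matrix (Fin n) (Fin n) ℂ, (phiT0 n f T a).trace = a.trace := by
    intro a
    simp only [phiT0, trace_add, trace_smul, trace_sum, htraceless, smul_eq_mul, mul_zero,
      Finset.sum_const_zero, add_zero, trace_one, Fintype.card_fin]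
    field_simp
  refine ⟨⟨?_, ?_⟩, htr, ?_, ?_⟩
  · -- additivity
    intro a b
    simp only [phiT0, Matrix.add_mul, trace_add, add_div, add_smul, mul_add,
      Finset.sum_add_distrib, smul_add]
    abel
  · -- homogeneity
    intro c a
    simp only [phiT0, Matrix.smul_mul, trace_smul, smul_eq_mul, smul_add, smul_smul]
    congr 1
    · rw [mul_div_assoc]
    · rw [Finset.smul_sum, Finset.smul_sum]
      simp only [smul_smul]
      refine Finset.sum_congr rfl fun α _ => ?_
      congr 1
      rw [Finset.mul_sum, Finset.mul_sum]
      ring_nf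
      refine Finset.sum_congr rfl fun β _ => by ring
  · -- unital
    simp only [phiT0, Matrix.one_mul, htraceless, mul_zero, Finset.sum_const_zero, zero_smul,
      Finset.sum_const_zero, smul_zero, add_zero, trace_one, Fintype.card_fin]
    rw [div_self hn0, one_smul]
  · -- positivity
    intro a ha
    have haH : a.IsHermitian := ha.isHermitian
    obtain ⟨htrA, htrA2⟩ := trace_eig haH
    set ev : Fin n → ℝ := haH.eigenvalues with hev
    set tr : ℝ := ∑ i, ev i with htrdef
    have htr0 : 0 ≤ tr := Finset.sum_nonneg fun i _ => ha.eigenvalues_nonneg i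
    have htrc : a.trace = (tr:ℂ) := by rw [htrA, htrdef]; norm_cast
    have hA2 : ∑ i, ev i ^ 2 ≤ tr ^ 2 := by
      rw [htrdef]
      exact Finset.sum_sq_le_sq_sum_of_nonneg fun i _ => ha.eigenvalues_nonneg i
    set x : Fin (n^2-1) → ℂ := fun β => (a * f β).trace with hxdef
    have hxreal : ∀ β, (starRingEnd ℂ) (x β) = x β := by
      intro β
      have h1 : (starRingEnd ℂ) (x β) = ((a * f β)ᴴ).trace := by
        rw [trace_conjTranspose]; rfl
      rw [h1, conjTranspose_mul, (hherm β).eq, haH.eq, trace_mul_comm]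
    set xr : Fin (n^2-1) → ℝ := fun β => (x β).re with hxrdef
    have hxc : ∀ β, x β = (xr β : ℂ) := by
      intro β
      exact (Complex.conj_eq_iff_re.mp (hxreal β)).symm
    -- Bessel : ∑ xr² ≤ ∑ ev² − tr²/n
    set s : Matrix (Fin n) (Fin n) ℂ := (a.trace / n) • 1 + ∑ β, x β • f β with hsdef
    have hstar_tn : star (a.trace / (n:ℂ)) = a.trace / n := by
      rw [htrc]
      rw [show ((tr:ℂ) / n) = ((tr / (n:ℝ) : ℝ) : ℂ) by push_cast; ring]
      exact Complex.conj_ofReal _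
    have hsH : sᴴ = s := by
      rw [hsdef, conjTranspose_add, conjTranspose_smul, conjTranspose_one, conjTranspose_sum,
        hstar_tn]
      congr 1
      refine Finset.sum_congr rfl fun β _ => ?_
      rw [conjTranspose_smul, (hherm β).eq, RCLike.star_def, hxreal]
    have hss : (s * s).trace = (a.trace / n) * (a.trace / n) * n + ∑ β, x β * x β :=
      trace_comb f htraceless horth _ _ x x
    have has : (a * s).trace = a.trace / n * a.trace + ∑ β, x β * x β := by
      rw [hsdef]
      simp only [Matrix.mul_add, Matrix.mul_smul, Matrix.mul_one, trace_add, trace_smul,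
        Matrix.mul_sum, trace_sum, smul_eq_mul]
      rfl
    have hsa : (s * a).trace = a.trace / n * a.trace + ∑ β, x β * x β := by
      rw [trace_mul_comm]; exact has
    set r : Matrix (Fin n) (Fin n) ℂ := a - s with hrdef
    have hrH : rᴴ = r := by rw [hrdef, conjTranspose_sub, haH.eq, hsH]
    have hrtrace : (rᴴ * r).trace
        = (a * a).trace - (a.trace * a.trace / n + ∑ β, x β * x β) := by
      rw [hrH, hrdef]
      simp only [Matrix.sub_mul, Matrix.mul_sub, trace_sub, has, hsa, hss]
      field_simp
      ring
    have hrpos : 0 ≤ ((rᴴ * r).trace).re := by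
      have h1 : (rᴴ * r).trace = ∑ i, ∑ j, (starRingEnd ℂ) (r j i) * r j i := by
        simp [Matrix.trace, Matrix.mul_apply, Matrix.diag, conjTranspose_apply]
      rw [h1]
      rw [Complex.re_sum]
      refine Finset.sum_nonneg fun i _ => ?_
      rw [Complex.re_sum]
      refine Finset.sum_nonneg fun j _ => ?_
      rw [mul_comm, Complex.mul_conj]
      simp [Complex.normSq_nonneg]
    have hsumxr : ∑ β, x β * x β = ((∑ β, xr β ^ 2 : ℝ) : ℂ) := by
      push_cast
      exact Finset.sum_congr rfl fun β _ => by rw [hxc β]; push_cast; ring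
    have htrA2' : (a * a).trace = ((∑ i, ev i ^ 2 : ℝ) : ℂ) := by
      rw [htrA2]; norm_cast
    have hbessel : ∑ β, xr β ^ 2 ≤ (∑ i, ev i ^ 2) - tr ^ 2 / n := by
      have hc : (rᴴ * r).trace
          = (((∑ i, ev i ^ 2) - (tr ^ 2 / n + ∑ β, xr β ^ 2) : ℝ) : ℂ) := by
        rw [hrtrace, htrA2', htrc, hsumxr]
        push_cast
        ring
      have := hrpos
      rw [hc, Complex.ofReal_re] at this
      linarith
    -- the matrix b
    set y : Fin (n^2-1) → ℂ := fun α => ∑ β, (T α β : ℂ) * x β with hydef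
    set z : Fin (n^2-1) → ℂ := fun α => (1 / ((n:ℂ) - 1)) * y α with hzdef
    have hbform : phiT0 n f T a = (a.trace / n) • 1 + ∑ α, z α • f α := by
      rw [phiT0, Finset.smul_sum]
      simp only [smul_smul]
      rfl
    have hyreal : ∀ α, (starRingEnd ℂ) (y α) = y α := by
      intro α
      rw [hydef]
      rw [map_sum]
      refine Finset.sum_congr rfl fun β _ => ?_
      rw [RingHom.map_mul, Complex.conj_ofReal, hxreal]
    have hcreal : (starRingEnd ℂ) (1 / ((n:ℂ) - 1)) = 1 / ((n:ℂ) - 1) := by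
      rw [show (1 / ((n:ℂ) - 1)) = ((1 / ((n:ℝ) - 1) : ℝ) : ℂ) by push_cast; ring]
      exact Complex.conj_ofReal _
    have hzreal : ∀ α, (starRingEnd ℂ) (z α) = z α := by
      intro α
      rw [hzdef, RingHom.map_mul, hcreal, hyreal]
    have hbH : (phiT0 n f T a).IsHermitian := by
      rw [IsHermitian, hbform, conjTranspose_add, conjTranspose_smul, conjTranspose_one,
        conjTranspose_sum, hstar_tn]
      congr 1
      refine Finset.sum_congr rfl fun α _ => ?_
      rw [conjTranspose_smul, (hherm α).eq, RCLike.star_def, hzreal]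
    -- ∑ y² = ∑ x²
    have hTorth : ∀ β γ, (∑ α, (T α β : ℂ) * (T α γ : ℂ)) = if β = γ then 1 else 0 := by
      intro β γ
      have h1 : ∑ α, T α β * T α γ = if β = γ then (1:ℝ) else 0 := by
        have h2 := congrFun (congrFun hT β) γ
        simpa [Matrix.mul_apply, Matrix.one_apply, transpose_apply] using h2
      calc (∑ α, (T α β : ℂ) * (T α γ : ℂ))
          = ((∑ α, T α β * T α γ : ℝ) : ℂ) := by push_cast; rfl
        _ = _ := by rw [h1]; split <;> simp
    have hyx : ∑ α, y α * y α = ∑ β, x β * x β := by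
      have h1 : ∑ α, y α * y α
          = ∑ β, ∑ γ, (∑ α, (T α β : ℂ) * (T α γ : ℂ)) * (x β * x γ) := by
        simp only [hydef, Finset.sum_mul_sum, Finset.sum_mul, Finset.mul_sum]
        rw [Finset.sum_comm]
        refine Finset.sum_congr rfl fun β _ => ?_
        rw [Finset.sum_comm]
        refine Finset.sum_congr rfl fun γ _ =>
          Finset.sum_congr rfl fun α _ => by ring
      rw [h1]
      simp only [hTorth, ite_mul, one_mul, zero_mul]
      simp [Finset.sum_ite_eq, Finset.mem_univ]
    -- eigenvalues of b
    obtain ⟨hb1, hb2⟩ := trace_eig hbH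
    set μ : Fin n → ℝ := hbH.eigenvalues with hμ
    have hμsum : ∑ i, μ i = tr := by
      have : ((∑ i, μ i : ℝ) : ℂ) = (tr : ℂ) := by
        rw [show ((∑ i, μ i : ℝ) : ℂ) = ∑ i, (μ i : ℂ) by push_cast; rfl]
        rw [← hb1, htr a, htrc]
      exact_mod_cast this
    have hbb : ((phiT0 n f T a) * (phiT0 n f T a)).trace
        = (a.trace / n) * (a.trace / n) * n + ∑ α, z α * z α := by
      conv_lhs => rw [hbform]
      exact trace_comb f htraceless horth _ _ z z
    have hzz : ∑ α, z α * z α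
        = (((1 / ((n:ℝ) - 1))^2 * (∑ β, xr β ^ 2) : ℝ) : ℂ) := by
      have : ∑ α, z α * z α = (1 / ((n:ℂ) - 1))^2 * ∑ α, y α * y α := by
        rw [Finset.mul_sum]
        exact Finset.sum_congr rfl fun α _ => by rw [hzdef]; ring
      rw [this, hyx, hsumxr]
      push_cast
      ring
    have hμsq : ∑ i, μ i ^ 2 = tr ^ 2 / n + (1 / ((n:ℝ) - 1))^2 * ∑ β, xr β ^ 2 := by
      have hC : ((∑ i, μ i ^ 2 : ℝ) : ℂ)
          = ((tr ^ 2 / n + (1 / ((n:ℝ) - 1))^2 * ∑ β, xr β ^ 2 : ℝ) : ℂ) := by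
        rw [show ((∑ i, μ i ^ 2 : ℝ) : ℂ) = ∑ i, (μ i : ℂ) ^ 2 by push_cast; rfl]
        rw [← hb2, hbb, hzz, htrc]
        push_cast
        field_simp
      exact_mod_cast hC
    clear_value μ ev tr x xr
    have hfin : ∑ i, μ i ^ 2 ≤ tr ^ 2 / ((n:ℝ) - 1) := by
      have hb' : ∑ β, xr β ^ 2 ≤ tr ^ 2 - tr ^ 2 / n := by
        have := hbessel
        linarith
      have hnn : (0:ℝ) < (n:ℝ) := by positivity
      have heq : tr ^ 2 / n + (1 / ((n:ℝ) - 1))^2 * (tr ^ 2 - tr ^ 2 / n)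
          = tr ^ 2 / ((n:ℝ) - 1) := by
        field_simp
        ring
      nlinarith [hμsq, hb', heq, sq_nonneg (1 / ((n:ℝ) - 1))]
    refine (Matrix.IsHermitian.posSemidef_iff_eigenvalues_nonneg hbH).mpr fun i => ?_
    have hfin2 := eig_nonneg_of_sq_bound hn μ tr htr0 hμsum hfin i
    rw [hμ] at hfin2
    exact hfin2
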